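/- Let n ≥ 0, m ≥ 0 and q ≥ 0 be integers and let b be either 0 or an odd integer with 0 < b < 2^q. Let N be the canonical form of n. Then for every number H whose value is m + b/2^q, N : H = n + m + b/2^q. -/

import Mathlib

/-! Port note: Mathlib no longer contains combinatorial game theory (`SetTheory.PGame`,
`SetTheory.Game`, `powHalf` were removed). The notions used below are re-created here with
their meaning in the Mathlib of December 2024. -/

universe u

namespace SetTheory

/-- Pre-games (as in the old Mathlib `SetTheory.PGame`). -/
inductive PGame : Type (u + 1)
  | mk : ∀ α β : Type u, (α → PGame) → (β → PGame) → PGame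

namespace PGame

/-- The indexing type for allowable moves by Left. -/
def LeftMoves : PGame → Type u
  | mk l _ _ _ => l

/-- The indexing type for allowable moves by Right. -/
def RightMoves : PGame → Type u
  | mk _ r _ _ => r

/-- The new game after Left makes an allowed move. -/
def moveLeft : ∀ g : PGame, LeftMoves g → PGame
  | mk _l _ L _ => L

/-- The new game after Right makes an allowed move. -/
def moveRight : ∀ g : PGame, RightMoves g → PGame
  | mk _ _r _ R => R

/-- Auxiliary: the pair `(x ≤ y, y ≤ x)`, defined by the old recursive characterization
`x ≤ y ↔ (∀ i, ¬ y ≤ x.moveLeft i) ∧ (∀ j, ¬ y.moveRight j ≤ x)`. -/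
noncomputable def leAux (x : PGame.{u}) : PGame.{u} → Prop × Prop :=
  PGame.rec (motive := fun _ => PGame.{u} → Prop × Prop)
    (fun _ _ xL xR ihL ihR y =>
      PGame.rec (motive := fun _ => Prop × Prop)
        (fun yl yr yL yR jhL jhR =>
          ((∀ i, ¬ (ihL i (mk yl yr yL yR)).2) ∧ (∀ j, ¬ (jhR j).2),
           (∀ j, ¬ (jhL j).1) ∧ (∀ i, ¬ (ihR i (mk yl yr yL yR)).1)))
        y)
    x

instance : LE PGame.{u} :=
  ⟨fun x y => (leAux x y).1⟩

theorem leAux_mk {xl xr yl yr : Type u} (xL : xl → PGame.{u}) (xR : xr → PGame.{u})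
    (yL : yl → PGame.{u}) (yR : yr → PGame.{u}) :
    leAux (mk xl xr xL xR) (mk yl yr yL yR) =
      ((∀ i, ¬ (leAux (xL i) (mk yl yr yL yR)).2) ∧ (∀ j, ¬ (leAux (mk xl xr xL xR) (yR j)).2),
       (∀ j, ¬ (leAux (mk xl xr xL xR) (yL j)).1) ∧ (∀ i, ¬ (leAux (xR i) (mk yl yr yL yR)).1)) :=
  rfl

theorem leAux_swap (x y : PGame.{u}) :
    ((leAux x y).2 ↔ (leAux y x).1) ∧ ((leAux y x).2 ↔ (leAux x y).1) := by
  induction x generalizing y with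
  | mk xl xr xL xR ihx1 ihx2 =>
    induction y with
    | mk yl yr yL yR ihy1 ihy2 =>
      rw [leAux_mk, leAux_mk]
      constructor
      · exact and_congr (forall_congr' fun j => not_congr (ihy1 j).2.symm)
          (forall_congr' fun i => not_congr (ihx2 i _).2.symm)
      · exact and_congr (forall_congr' fun i => not_congr (ihx1 i _).1.symm)
          (forall_congr' fun j => not_congr (ihy2 j).1.symm)

theorem le_def' {x y : PGame.{u}} :
    x ≤ y ↔ (∀ i, ¬ y ≤ x.moveLeft i) ∧ (∀ j, ¬ y.moveRight j ≤ x) := by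
  cases x with
  | mk xl xr xL xR =>
    cases y with
    | mk yl yr yL yR =>
      change (leAux (mk xl xr xL xR) (mk yl yr yL yR)).1 ↔ _
      rw [leAux_mk]
      exact and_congr (forall_congr' fun i => not_congr (leAux_swap (xL i) (mk yl yr yL yR)).1)
        (forall_congr' fun j => not_congr (leAux_swap (mk xl xr xL xR) (yR j)).1)

theorem le_refl' (x : PGame.{u}) : x ≤ x := by
  induction x with
  | mk xl xr xL xR ihL ihR =>
    rw [le_def']
    refine ⟨fun i h => ?_, fun j h => ?_⟩
    · rw [le_def'] at h
      exact h.1 i (ihL i)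
    · rw [le_def'] at h
      exact h.2 j (ihR j)

theorem le_trans_aux' {x y z : PGame.{u}}
    (h₁ : ∀ {i}, y ≤ z → z ≤ x.moveLeft i → y ≤ x.moveLeft i)
    (h₂ : ∀ {j}, z.moveRight j ≤ x → x ≤ y → z.moveRight j ≤ y)
    (hxy : x ≤ y) (hyz : y ≤ z) : x ≤ z := by
  rw [le_def'] at hxy hyz ⊢
  exact ⟨fun i h => hxy.1 i (h₁ (le_def'.2 hyz) h),
    fun j h => hyz.2 j (h₂ h (le_def'.2 hxy))⟩

theorem le_trans_all : ∀ x y z : PGame.{u},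
    (x ≤ y → y ≤ z → x ≤ z) ∧ (y ≤ z → z ≤ x → y ≤ x) ∧ (z ≤ x → x ≤ y → z ≤ y) := by
  intro x
  induction x with
  | mk xl xr xL xR IHxl IHxr =>
    intro y
    induction y with
    | mk yl yr yL yR IHyl IHyr =>
      intro z
      induction z with
      | mk zl zr zL zR IHzl IHzr =>
        exact ⟨le_trans_aux' (fun {i} => (IHxl i _ _).2.1) (fun {j} => (IHzr j).2.2),
          le_trans_aux' (fun {i} => (IHyl i _).2.2) (fun {j} => (IHxr j _ _).1),
          le_trans_aux' (fun {i} => (IHzl i).1) (fun {j} => (IHyr j _).2.1)⟩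

instance : Preorder PGame.{u} where
  le_refl := le_refl'
  le_trans x y z := (le_trans_all x y z).1

/-- Two pre-games are equivalent if `x ≤ y` and `y ≤ x`. -/
def PEquiv (x y : PGame.{u}) : Prop :=
  x ≤ y ∧ y ≤ x

instance setoid : Setoid PGame.{u} :=
  ⟨PEquiv, ⟨fun x => ⟨le_rfl, le_rfl⟩, fun h => ⟨h.2, h.1⟩,
    fun h₁ h₂ => ⟨h₁.1.trans h₂.1, h₂.2.trans h₁.2⟩⟩⟩

/-- The pre-game `Zero` is defined by `0 = { | }`. -/
instance : Zero PGame.{u} :=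
  ⟨mk PEmpty PEmpty PEmpty.elim PEmpty.elim⟩

/-- The pre-game `One` is defined by `1 = { 0 | }`. -/
instance : One PGame.{u} :=
  ⟨mk PUnit PEmpty (fun _ => 0) PEmpty.elim⟩

/-- The negation of `{L | R}` is `{-R | -L}`. -/
def neg : PGame.{u} → PGame.{u}
  | ⟨l, r, L, R⟩ => ⟨r, l, fun i => neg (R i), fun i => neg (L i)⟩

instance : Neg PGame.{u} :=
  ⟨neg⟩

/-- The sum of `x = {xL | xR}` and `y = {yL | yR}` is `{xL + y, x + yL | xR + y, x + yR}`. -/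
noncomputable def add (x : PGame.{u}) : PGame.{u} → PGame.{u} :=
  PGame.rec (motive := fun _ => PGame.{u} → PGame.{u})
    (fun xl xr xL xR IHxl IHxr y =>
      PGame.rec (motive := fun _ => PGame.{u})
        (fun yl yr yL yR IHyl IHyr =>
          mk (xl ⊕ yl) (xr ⊕ yr)
            (Sum.rec (fun i => IHxl i (mk yl yr yL yR)) IHyl)
            (Sum.rec (fun i => IHxr i (mk yl yr yL yR)) IHyr))
        y)
    x

noncomputable instance : Add PGame.{u} :=
  ⟨add⟩

/-- A pre-game is numeric if everything in the L set is less than everything in the R set,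
and all the elements of L and R are also numeric. -/
def Numeric : PGame.{u} → Prop
  | ⟨_, _, L, R⟩ => (∀ i j, L i < R j) ∧ (∀ i, Numeric (L i)) ∧ ∀ j, Numeric (R j)

/-- For a natural number `n`, the pre-game `powHalf (n + 1)` is recursively defined as
`{0 | powHalf n}`. These are the explicit expressions of powers of `1 / 2`. -/
def powHalf : ℕ → PGame.{u}
  | 0 => 1
  | n + 1 => ⟨PUnit, PUnit, fun _ => 0, fun _ => powHalf n⟩

end PGame

/-- Games: pre-games modulo equivalence. -/
abbrev Game :=
  Quotient PGame.setoid

namespace Game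

instance : Zero Game.{u} :=
  ⟨⟦0⟧⟩

/-- Addition of games (well defined on classes, since `+` respects equivalence of
pre-games; the representative chosen does not matter). -/
noncomputable instance : Add Game.{u} :=
  ⟨fun a b => ⟦a.out + b.out⟧⟩

/-- Negation of games (well defined on classes, as above). -/
noncomputable instance : Neg Game.{u} :=
  ⟨fun a => ⟦-a.out⟧⟩

/-- Integer multiples, as `zsmul` of the old `AddCommGroup Game` instance (`zsmulRec`). -/
noncomputable instance : SMul ℤ Game.{u} :=
  ⟨zsmulRec⟩

end Game

end SetTheory

open SetTheory PGame

/-- Ordinal sum `G : H`: players may move in the base `G` (ending all play in the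
subordinate) or in the subordinate `H`. -/
def ordinalSum (G : PGame.{u}) : PGame.{u} → PGame.{u}
  | ⟨yl, yr, yL, yR⟩ =>
    ⟨G.LeftMoves ⊕ yl, G.RightMoves ⊕ yr,
     Sum.elim G.moveLeft fun j => ordinalSum G (yL j),
     Sum.elim G.moveRight fun j => ordinalSum G (yR j)⟩

/-- `G ≜ H`: equivalence modulo domination.  Every Left option of `G` is `≤` some Left
option of `H`, every Left option of `H` is `≤` some Left option of `G`, every Right option
of `G` is `≥` some Right option of `H`, and every Right option of `H` is `≥` some Right
option of `G`. -/
def EquivDom (G H : PGame) : Prop :=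
  (∀ i, ∃ j, G.moveLeft i ≤ H.moveLeft j) ∧
  (∀ j, ∃ i, H.moveLeft j ≤ G.moveLeft i) ∧
  (∀ i, ∃ j, H.moveRight j ≤ G.moveRight i) ∧
  (∀ j, ∃ i, G.moveRight i ≤ H.moveRight j)

/-- The ball `⟨a | b⟩`: the game with exactly one Left option `a` and exactly one Right
option `b`. -/
def ball (a b : PGame.{u}) : PGame.{u} :=
  ⟨PUnit, PUnit, fun _ => a, fun _ => b⟩

/-- The canonical form of a natural number: `0 ≅ ⟨ | ⟩` and `n+1 ≅ ⟨n | ⟩`. -/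
def canonNat : ℕ → PGame
  | 0 => 0
  | n + 1 => ⟨PUnit, PEmpty, fun _ => canonNat n, PEmpty.elim⟩

/-- The canonical form of an integer: for `n ≥ 0` it is `canonNat n`, and the canonical
form of a negative integer is the negative of the canonical form of its absolute value. -/
def canonInt (n : ℤ) : PGame :=
  if 0 ≤ n then canonNat n.toNat else -canonNat (-n).toNat

/-- The game value of the dyadic rational `a / 2 ^ q`. -/
noncomputable def dyadicVal (a : ℤ) (q : ℕ) : Game :=
  a • (⟦powHalf q⟧ : Game)


namespace SetTheory
namespace PGame

/-- `x ⧏ y`: `y ≤ x` fails. -/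
def LF (x y : PGame.{u}) : Prop := ¬ y ≤ x

infixl:50 " ⧏ " => PGame.LF

theorem le_iff_forall_lf {x y : PGame.{u}} :
    x ≤ y ↔ (∀ i, x.moveLeft i ⧏ y) ∧ ∀ j, x ⧏ y.moveRight j := le_def'

theorem lf_iff_exists_le {x y : PGame.{u}} :
    x ⧏ y ↔ (∃ i, x ≤ y.moveLeft i) ∨ ∃ j, x.moveRight j ≤ y := by
  unfold LF
  rw [le_def' (x := y)]
  simp only [not_and_or, not_forall, not_not]

theorem lf_of_le_moveLeft {x y : PGame.{u}} {i : y.LeftMoves} (h : x ≤ y.moveLeft i) : x ⧏ y :=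
  lf_iff_exists_le.2 (Or.inl ⟨i, h⟩)

theorem lf_of_moveRight_le {x y : PGame.{u}} {j : x.RightMoves} (h : x.moveRight j ≤ y) :
    x ⧏ y :=
  lf_iff_exists_le.2 (Or.inr ⟨j, h⟩)

theorem moveLeft_lf {x : PGame.{u}} (i : x.LeftMoves) : x.moveLeft i ⧏ x :=
  lf_of_le_moveLeft (i := i) le_rfl

theorem lf_moveRight {x : PGame.{u}} (j : x.RightMoves) : x ⧏ x.moveRight j :=
  lf_of_moveRight_le (j := j) le_rfl

theorem _root_.LE.le.moveLeft_lf {x y : PGame.{u}} (h : x ≤ y) (i : x.LeftMoves) :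
    x.moveLeft i ⧏ y :=
  (le_iff_forall_lf.1 h).1 i

theorem _root_.LE.le.lf_moveRight {x y : PGame.{u}} (h : x ≤ y) (j : y.RightMoves) :
    x ⧏ y.moveRight j :=
  (le_iff_forall_lf.1 h).2 j

theorem lf_of_lf_of_le {x y z : PGame.{u}} (h : x ⧏ y) (h' : y ≤ z) : x ⧏ z :=
  fun h'' => h (h'.trans h'')

theorem lf_of_le_of_lf {x y z : PGame.{u}} (h : x ≤ y) (h' : y ⧏ z) : x ⧏ z :=
  fun h'' => h' (h''.trans h)

theorem lf_of_lt {x y : PGame.{u}} (h : x < y) : x ⧏ y := (lt_iff_le_not_ge.1 h).2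

instance isEmpty_zero_leftMoves : IsEmpty (LeftMoves (0 : PGame.{u})) :=
  inferInstanceAs (IsEmpty PEmpty)

instance isEmpty_zero_rightMoves : IsEmpty (RightMoves (0 : PGame.{u})) :=
  inferInstanceAs (IsEmpty PEmpty)

instance isEmpty_one_rightMoves : IsEmpty (RightMoves (1 : PGame.{u})) :=
  inferInstanceAs (IsEmpty PEmpty)

/-- Well-founded relation of options. -/
inductive IsOption : PGame.{u} → PGame.{u} → Prop
  | moveLeft {x : PGame.{u}} (i : x.LeftMoves) : IsOption (x.moveLeft i) x
  | moveRight {x : PGame.{u}} (i : x.RightMoves) : IsOption (x.moveRight i) x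

theorem wf_isOption : WellFounded IsOption.{u} :=
  ⟨fun x => by
    induction x with
    | mk xl xr xL xR ihl ihr =>
      constructor
      intro y h
      cases h with
      | moveLeft i => exact ihl i
      | moveRight j => exact ihr j⟩

instance : WellFoundedRelation PGame.{u} := ⟨IsOption, wf_isOption⟩

/-- Moves of a sum. -/
def toLeftMovesAdd {x y : PGame.{u}} : x.LeftMoves ⊕ y.LeftMoves ≃ (x + y).LeftMoves := by
  cases x; cases y; exact Equiv.refl _

/-- Moves of a sum. -/
def toRightMovesAdd {x y : PGame.{u}} : x.RightMoves ⊕ y.RightMoves ≃ (x + y).RightMoves := by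
  cases x; cases y; exact Equiv.refl _

theorem add_moveLeft_inl (x y : PGame.{u}) (i : x.LeftMoves) :
    (x + y).moveLeft (toLeftMovesAdd (Sum.inl i)) = x.moveLeft i + y := by
  cases x; cases y; rfl

theorem add_moveLeft_inr (x y : PGame.{u}) (i : y.LeftMoves) :
    (x + y).moveLeft (toLeftMovesAdd (Sum.inr i)) = x + y.moveLeft i := by
  cases x; cases y; rfl

theorem add_moveRight_inl (x y : PGame.{u}) (i : x.RightMoves) :
    (x + y).moveRight (toRightMovesAdd (Sum.inl i)) = x.moveRight i + y := by
  cases x; cases y; rfl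

theorem add_moveRight_inr (x y : PGame.{u}) (i : y.RightMoves) :
    (x + y).moveRight (toRightMovesAdd (Sum.inr i)) = x + y.moveRight i := by
  cases x; cases y; rfl

theorem leftMoves_add_cases {x y : PGame.{u}} {P : (x + y).LeftMoves → Prop} (k : (x + y).LeftMoves)
    (hl : ∀ i, P (toLeftMovesAdd (Sum.inl i))) (hr : ∀ i, P (toLeftMovesAdd (Sum.inr i))) : P k := by
  obtain ⟨i, rfl⟩ := toLeftMovesAdd.surjective k
  rcases i with i | i
  exacts [hl i, hr i]

theorem rightMoves_add_cases {x y : PGame.{u}} {P : (x + y).RightMoves → Prop}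
    (k : (x + y).RightMoves)
    (hl : ∀ i, P (toRightMovesAdd (Sum.inl i))) (hr : ∀ i, P (toRightMovesAdd (Sum.inr i))) :
    P k := by
  obtain ⟨i, rfl⟩ := toRightMovesAdd.surjective k
  rcases i with i | i
  exacts [hl i, hr i]

instance isEmpty_add_rightMoves {x y : PGame.{u}} [IsEmpty x.RightMoves] [IsEmpty y.RightMoves] :
    IsEmpty (x + y).RightMoves :=
  ⟨fun k => (toRightMovesAdd.symm k).elim isEmptyElim isEmptyElim⟩

/-- Moves of a negation. -/
def toLeftMovesNeg {x : PGame.{u}} : x.RightMoves ≃ (-x).LeftMoves := by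
  cases x; exact Equiv.refl _

/-- Moves of a negation. -/
def toRightMovesNeg {x : PGame.{u}} : x.LeftMoves ≃ (-x).RightMoves := by
  cases x; exact Equiv.refl _

theorem moveLeft_neg (x : PGame.{u}) (i : x.RightMoves) :
    (-x).moveLeft (toLeftMovesNeg i) = -x.moveRight i := by
  cases x; rfl

theorem moveRight_neg (x : PGame.{u}) (i : x.LeftMoves) :
    (-x).moveRight (toRightMovesNeg i) = -x.moveLeft i := by
  cases x; rfl

/-- Relabellings. -/
inductive Relabelling : PGame.{u} → PGame.{u} → Type (u + 1)
  | mk : ∀ {x y : PGame.{u}} (L : x.LeftMoves ≃ y.LeftMoves) (R : x.RightMoves ≃ y.RightMoves),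
      (∀ i, Relabelling (x.moveLeft i) (y.moveLeft (L i))) →
        (∀ j, Relabelling (x.moveRight j) (y.moveRight (R j))) → Relabelling x y

infixl:50 " ≡r " => PGame.Relabelling

theorem Relabelling.le_ge {x y : PGame.{u}} (r : x ≡r y) : x ≤ y ∧ y ≤ x := by
  induction r with
  | mk L R hL hR ihL ihR =>
    constructor
    · rw [le_iff_forall_lf]
      refine ⟨fun i => lf_of_le_of_lf (ihL i).1 (moveLeft_lf (L i)), fun j => ?_⟩
      obtain ⟨j', rfl⟩ := R.surjective j
      exact lf_of_lf_of_le (lf_moveRight j') (ihR j').1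
    · rw [le_iff_forall_lf]
      refine ⟨fun i => ?_, fun j => lf_of_lf_of_le (lf_moveRight (R j)) (ihR j).2⟩
      obtain ⟨i', rfl⟩ := L.surjective i
      exact lf_of_le_of_lf (ihL i').2 (moveLeft_lf i')

theorem Relabelling.equiv {x y : PGame.{u}} (r : x ≡r y) : x ≈ y := r.le_ge

/-- `x + 0 ≡r x`. -/
noncomputable def addZeroRelabelling (x : PGame.{u}) : x + 0 ≡r x := by
  induction x with
  | mk xl xr xL xR ihl ihr =>
    refine ⟨Equiv.sumEmpty xl PEmpty, Equiv.sumEmpty xr PEmpty, ?_, ?_⟩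
    · rintro (i | i)
      · exact ihl i
      · exact i.elim
    · rintro (j | j)
      · exact ihr j
      · exact j.elim

/-- `0 + x ≡r x`. -/
noncomputable def zeroAddRelabelling (x : PGame.{u}) : 0 + x ≡r x := by
  induction x with
  | mk xl xr xL xR ihl ihr =>
    refine ⟨Equiv.emptySum PEmpty xl, Equiv.emptySum PEmpty xr, ?_, ?_⟩
    · rintro (i | i)
      · exact i.elim
      · exact ihl i
    · rintro (j | j)
      · exact j.elim
      · exact ihr j

/-- `x + y ≡r y + x`. -/
noncomputable def addCommRelabelling (x y : PGame.{u}) : x + y ≡r y + x := by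
  induction x generalizing y with
  | mk xl xr xL xR ihxl ihxr =>
    induction y with
    | mk yl yr yL yR ihyl ihyr =>
      refine ⟨Equiv.sumComm _ _, Equiv.sumComm _ _, ?_, ?_⟩
      · rintro (i | i)
        · exact ihxl i _
        · exact ihyl i
      · rintro (j | j)
        · exact ihxr j _
        · exact ihyr j

/-- `x + y + z ≡r x + (y + z)`. -/
noncomputable def addAssocRelabelling (x y z : PGame.{u}) : x + y + z ≡r x + (y + z) := by
  induction x generalizing y z with
  | mk xl xr xL xR ihxl ihxr =>
    induction y generalizing z with
    | mk yl yr yL yR ihyl ihyr =>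
      induction z with
      | mk zl zr zL zR ihzl ihzr =>
        refine ⟨Equiv.sumAssoc _ _ _, Equiv.sumAssoc _ _ _, ?_, ?_⟩
        · rintro ((i | i) | i)
          · exact ihxl i _ _
          · exact ihyl i _
          · exact ihzl i
        · rintro ((j | j) | j)
          · exact ihxr j _ _
          · exact ihyr j _
          · exact ihzr j

theorem neg_add_cancel_le_ge (x : PGame.{u}) : -x + x ≤ 0 ∧ 0 ≤ -x + x := by
  induction x with
  | mk xl xr xL xR ihl ihr =>
    constructor
    · rw [le_iff_forall_lf]
      refine ⟨fun k => ?_, fun j => isEmptyElim j⟩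
      refine leftMoves_add_cases
        (P := fun k => (-mk xl xr xL xR + mk xl xr xL xR).moveLeft k ⧏ 0) k ?_ ?_
      · intro i
        obtain ⟨i, rfl⟩ := toLeftMovesNeg.surjective i
        rw [add_moveLeft_inl, moveLeft_neg]
        apply lf_of_moveRight_le (j := toRightMovesAdd (Sum.inr i))
        rw [add_moveRight_inr]
        exact (ihr i).1
      · intro i
        rw [add_moveLeft_inr]
        apply lf_of_moveRight_le (j := toRightMovesAdd (Sum.inl (toRightMovesNeg i)))
        rw [add_moveRight_inl, moveRight_neg]
        exact (ihl i).1
    · rw [le_iff_forall_lf]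
      refine ⟨fun i => isEmptyElim i, fun k => ?_⟩
      refine rightMoves_add_cases
        (P := fun k => 0 ⧏ (-mk xl xr xL xR + mk xl xr xL xR).moveRight k) k ?_ ?_
      · intro j
        obtain ⟨j, rfl⟩ := toRightMovesNeg.surjective j
        rw [add_moveRight_inl, moveRight_neg]
        apply lf_of_le_moveLeft (i := toLeftMovesAdd (Sum.inr j))
        rw [add_moveLeft_inr]
        exact (ihl j).2
      · intro j
        rw [add_moveRight_inr]
        apply lf_of_le_moveLeft (i := toLeftMovesAdd (Sum.inl (toLeftMovesNeg j)))
        rw [add_moveLeft_inl, moveLeft_neg]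
        exact (ihr j).2

theorem add_le_lf_aux (x y z : PGame.{u}) :
    (x ≤ y → x + z ≤ y + z) ∧ (x ⧏ y → x + z ⧏ y + z) := by
  induction x generalizing y z with
  | mk xl xr xL xR ihxl ihxr =>
    induction y generalizing z with
    | mk yl yr yL yR ihyl ihyr =>
      induction z with
      | mk zl zr zL zR ihzl ihzr =>
        constructor
        · intro h
          rw [le_iff_forall_lf]
          constructor
          · intro k
            refine leftMoves_add_cases (P := fun k => (mk xl xr xL xR + mk zl zr zL zR).moveLeft k ⧏
              mk yl yr yL yR + mk zl zr zL zR) k ?_ ?_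
            · intro i
              rw [add_moveLeft_inl]
              exact (ihxl i _ _).2 (h.moveLeft_lf i)
            · intro i
              rw [add_moveLeft_inr]
              have := moveLeft_lf (x := mk yl yr yL yR + mk zl zr zL zR) (toLeftMovesAdd (Sum.inr i))
              rw [add_moveLeft_inr] at this
              exact lf_of_le_of_lf ((ihzl i).1 h) this
          · intro k
            refine rightMoves_add_cases (P := fun k => mk xl xr xL xR + mk zl zr zL zR ⧏
              (mk yl yr yL yR + mk zl zr zL zR).moveRight k) k ?_ ?_
            · intro j
              rw [add_moveRight_inl]
              exact (ihyr j _).2 (h.lf_moveRight j)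
            · intro j
              rw [add_moveRight_inr]
              have := lf_moveRight (x := mk xl xr xL xR + mk zl zr zL zR) (toRightMovesAdd (Sum.inr j))
              rw [add_moveRight_inr] at this
              exact lf_of_lf_of_le this ((ihzr j).1 h)
        · intro h
          rw [lf_iff_exists_le] at h
          rcases h with ⟨i, hi⟩ | ⟨j, hj⟩
          · apply lf_of_le_moveLeft (i := toLeftMovesAdd (Sum.inl i))
            rw [add_moveLeft_inl]
            exact (ihyl i _).1 hi
          · apply lf_of_moveRight_le (j := toRightMovesAdd (Sum.inl j))
            rw [add_moveRight_inl]
            exact (ihxr j _ _).1 hj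

theorem pg_add_le_add_right {x y : PGame.{u}} (h : x ≤ y) (z : PGame.{u}) : x + z ≤ y + z :=
  (add_le_lf_aux x y z).1 h

theorem pg_add_le_add_left {x y : PGame.{u}} (h : x ≤ y) (z : PGame.{u}) : z + x ≤ z + y :=
  (addCommRelabelling z x).le_ge.1.trans
    ((pg_add_le_add_right h z).trans (addCommRelabelling y z).le_ge.1)

theorem pg_add_congr {a b c d : PGame.{u}} (h1 : a ≈ b) (h2 : c ≈ d) : a + c ≈ b + d :=
  ⟨(pg_add_le_add_right h1.1 c).trans (pg_add_le_add_left h2.1 b),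
    (pg_add_le_add_right h1.2 d).trans (pg_add_le_add_left h2.2 a)⟩

theorem add_zero_equiv (x : PGame.{u}) : x + 0 ≈ x := (addZeroRelabelling x).equiv

theorem game_eq {x y : PGame.{u}} (h : x ≈ y) : (⟦x⟧ : Game) = ⟦y⟧ := Quotient.sound h

theorem equiv_iff_game_eq {x y : PGame.{u}} : x ≈ y ↔ (⟦x⟧ : Game) = ⟦y⟧ :=
  ⟨Quotient.sound, Quotient.exact⟩

theorem quot_add (x y : PGame.{u}) : (⟦x + y⟧ : Game) = ⟦x⟧ + ⟦y⟧ := by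
  show (⟦x + y⟧ : Game) = ⟦(⟦x⟧ : Game).out + (⟦y⟧ : Game).out⟧
  exact Quotient.sound (pg_add_congr (Setoid.symm (Quotient.mk_out x))
    (Setoid.symm (Quotient.mk_out y)))

end PGame

namespace Game

instance : One Game.{u} :=
  ⟨⟦1⟧⟩

instance : LE Game.{u} :=
  ⟨Quotient.lift₂ (fun x y : PGame.{u} => x ≤ y) fun _ _ _ _ ha hb =>
    propext ⟨fun h => (ha.2.trans h).trans hb.1, fun h => (ha.1.trans h).trans hb.2⟩⟩

instance : LT Game.{u} :=
  ⟨fun a b => a ≤ b ∧ ¬ b ≤ a⟩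

instance gamePreorder : Preorder Game.{u} where
  le := (· ≤ ·)
  lt := (· < ·)
  lt_iff_le_not_ge _ _ := Iff.rfl
  le_refl a := Quotient.inductionOn a fun x => (le_refl x : x ≤ x)
  le_trans a b c := Quotient.inductionOn₃ a b c fun x y z (h1 : x ≤ y) (h2 : y ≤ z) =>
    (h1.trans h2 : x ≤ z)

instance : PartialOrder Game.{u} where
  le_antisymm a b := Quotient.inductionOn₂ a b fun x y (h1 : x ≤ y) (h2 : y ≤ x) =>
    Quotient.sound ⟨h1, h2⟩

theorem game_add_assoc (a b c : Game.{u}) : a + b + c = a + (b + c) :=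
  Quotient.inductionOn₃ a b c fun x y z => by
    have h1 : (⟦x + y + z⟧ : Game) = ⟦x⟧ + ⟦y⟧ + ⟦z⟧ := by rw [PGame.quot_add, PGame.quot_add]
    have h2 : (⟦x + (y + z)⟧ : Game) = ⟦x⟧ + (⟦y⟧ + ⟦z⟧) := by
      rw [PGame.quot_add, PGame.quot_add]
    rw [← h1, ← h2]
    exact Quotient.sound (PGame.addAssocRelabelling x y z).equiv

theorem game_add_comm (a b : Game.{u}) : a + b = b + a :=
  Quotient.inductionOn₂ a b fun x y => by
    rw [← PGame.quot_add, ← PGame.quot_add]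
    exact Quotient.sound (PGame.addCommRelabelling x y).equiv

theorem game_zero_add (a : Game.{u}) : 0 + a = a :=
  Quotient.inductionOn a fun x => by
    have h : (⟦0 + x⟧ : Game) = 0 + ⟦x⟧ := PGame.quot_add 0 x
    rw [← h]
    exact Quotient.sound (PGame.zeroAddRelabelling x).equiv

theorem game_add_zero (a : Game.{u}) : a + 0 = a :=
  Quotient.inductionOn a fun x => by
    have h : (⟦x + 0⟧ : Game) = ⟦x⟧ + 0 := PGame.quot_add x 0
    rw [← h]
    exact Quotient.sound (PGame.addZeroRelabelling x).equiv

theorem game_neg_add_cancel (a : Game.{u}) : -a + a = 0 := by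
  show (⟦-a.out⟧ : Game) + a = 0
  have h := Quotient.out_eq a
  generalize a.out = x at h ⊢
  subst h
  rw [← PGame.quot_add]
  exact Quotient.sound (PGame.neg_add_cancel_le_ge x)

noncomputable instance : AddCommGroup Game.{u} where
  add := (· + ·)
  zero := 0
  neg := Neg.neg
  add_assoc := game_add_assoc
  zero_add := game_zero_add
  add_zero := game_add_zero
  nsmul := nsmulRec
  zsmul := zsmulRec
  neg_add_cancel := game_neg_add_cancel
  add_comm := game_add_comm

theorem game_add_le_add_left (a b : Game.{u}) (h : a ≤ b) (c : Game.{u}) : a + c ≤ b + c := by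
  revert h
  refine Quotient.inductionOn₃ a b c fun x y z h => ?_
  have := PGame.pg_add_le_add_right (h : x ≤ y) z
  rw [← PGame.quot_add, ← PGame.quot_add]
  exact this

instance : IsOrderedAddMonoid Game.{u} where
  add_le_add_left := game_add_le_add_left

end Game

namespace PGame

@[simp] theorem quot_zero : (⟦0⟧ : Game.{u}) = 0 := rfl

@[simp] theorem quot_one : (⟦1⟧ : Game.{u}) = 1 := rfl

theorem le_iff_game_le {x y : PGame.{u}} : x ≤ y ↔ (⟦x⟧ : Game) ≤ ⟦y⟧ := Iff.rfl

theorem lt_iff_game_lt {x y : PGame.{u}} : x < y ↔ (⟦x⟧ : Game) < ⟦y⟧ := by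
  rw [lt_iff_le_not_ge]
  rfl

theorem Numeric.mk {x : PGame.{u}} (h1 : ∀ i j, x.moveLeft i < x.moveRight j)
    (h2 : ∀ i, (x.moveLeft i).Numeric) (h3 : ∀ j, (x.moveRight j).Numeric) : x.Numeric := by
  cases x; exact ⟨h1, h2, h3⟩

theorem Numeric.left_lt_right {x : PGame.{u}} (o : x.Numeric) (i : x.LeftMoves)
    (j : x.RightMoves) : x.moveLeft i < x.moveRight j := by
  cases x; exact o.1 i j

theorem Numeric.moveLeft {x : PGame.{u}} (o : x.Numeric) (i : x.LeftMoves) :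
    (x.moveLeft i).Numeric := by
  cases x; exact o.2.1 i

theorem Numeric.moveRight {x : PGame.{u}} (o : x.Numeric) (j : x.RightMoves) :
    (x.moveRight j).Numeric := by
  cases x; exact o.2.2 j

theorem numeric_zero : Numeric (0 : PGame.{u}) :=
  Numeric.mk (fun i => isEmptyElim i) (fun i => isEmptyElim i) (fun j => isEmptyElim j)

theorem numeric_one : Numeric (1 : PGame.{u}) :=
  Numeric.mk (fun _ j => isEmptyElim j) (fun _ => numeric_zero) (fun j => isEmptyElim j)

theorem lf_asymm_aux (x : PGame.{u}) :
    ∀ y : PGame.{u}, x.Numeric → y.Numeric → x ⧏ y → ¬ y ⧏ x := by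
  induction x with
  | mk xl xr xL xR ihl ihr =>
    intro y ox oy h₁ h₂
    rw [lf_iff_exists_le] at h₁ h₂
    rcases h₁ with ⟨i, h₁⟩ | ⟨j, h₁⟩ <;> rcases h₂ with ⟨i', h₂⟩ | ⟨j', h₂⟩
    · exact ihl i' (y.moveLeft i) (ox.moveLeft i') (oy.moveLeft i)
        (lf_of_lf_of_le (moveLeft_lf i') h₁) (lf_of_lf_of_le (moveLeft_lf i) h₂)
    · exact (lt_iff_le_not_ge.1 (oy.left_lt_right i j')).2 (h₂.trans h₁)
    · exact (lt_iff_le_not_ge.1 (ox.left_lt_right i' j)).2 (h₁.trans h₂)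
    · exact ihr j (y.moveRight j') (ox.moveRight j) (oy.moveRight j')
        (lf_of_le_of_lf h₁ (lf_moveRight j')) (lf_of_le_of_lf h₂ (lf_moveRight j))

theorem lt_of_lf {x y : PGame.{u}} (h : x ⧏ y) (ox : x.Numeric) (oy : y.Numeric) : x < y :=
  lt_iff_le_not_ge.2 ⟨by by_contra h'; exact lf_asymm_aux x y ox oy h h', h⟩

theorem Numeric.moveLeft_lt {x : PGame.{u}} (o : x.Numeric) (i : x.LeftMoves) :
    x.moveLeft i < x :=
  lt_of_lf (moveLeft_lf i) (o.moveLeft i) o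

theorem Numeric.lt_moveRight {x : PGame.{u}} (o : x.Numeric) (j : x.RightMoves) :
    x < x.moveRight j :=
  lt_of_lf (lf_moveRight j) o (o.moveRight j)

theorem lt_or_equiv_or_gt {x y : PGame.{u}} (ox : x.Numeric) (oy : y.Numeric) :
    x < y ∨ x ≈ y ∨ y < x := by
  by_cases h1 : x ≤ y
  · by_cases h2 : y ≤ x
    · exact Or.inr (Or.inl ⟨h1, h2⟩)
    · exact Or.inl (lt_iff_le_not_ge.2 ⟨h1, h2⟩)
  · exact Or.inr (Or.inr (lt_of_lf h1 oy ox))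

theorem le_iff_forall_lt {x y : PGame.{u}} (ox : x.Numeric) (oy : y.Numeric) :
    x ≤ y ↔ (∀ i, x.moveLeft i < y) ∧ ∀ j, x < y.moveRight j := by
  rw [le_iff_forall_lf]
  exact ⟨fun h => ⟨fun i => lt_of_lf (h.1 i) (ox.moveLeft i) oy,
      fun j => lt_of_lf (h.2 j) ox (oy.moveRight j)⟩,
    fun h => ⟨fun i => lf_of_lt (h.1 i), fun j => lf_of_lt (h.2 j)⟩⟩

theorem add_left_lt_right {x y : PGame.{u}} (ox : x.Numeric) (oy : y.Numeric)
    (k : (x + y).LeftMoves) (l : (x + y).RightMoves) :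
    (x + y).moveLeft k < (x + y).moveRight l := by
  refine leftMoves_add_cases (P := fun k => (x + y).moveLeft k < (x + y).moveRight l) k ?_ ?_
  · intro i
    refine rightMoves_add_cases
      (P := fun l => (x + y).moveLeft (toLeftMovesAdd (Sum.inl i)) < (x + y).moveRight l) l ?_ ?_
    · intro j
      rw [add_moveLeft_inl, add_moveRight_inl, lt_iff_game_lt, quot_add, quot_add]
      exact add_lt_add_of_lt_of_le (lt_iff_game_lt.1 (ox.left_lt_right i j)) le_rfl
    · intro j
      rw [add_moveLeft_inl, add_moveRight_inr, lt_iff_game_lt, quot_add, quot_add]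
      exact add_lt_add (lt_iff_game_lt.1 (ox.moveLeft_lt i)) (lt_iff_game_lt.1 (oy.lt_moveRight j))
  · intro i
    refine rightMoves_add_cases
      (P := fun l => (x + y).moveLeft (toLeftMovesAdd (Sum.inr i)) < (x + y).moveRight l) l ?_ ?_
    · intro j
      rw [add_moveLeft_inr, add_moveRight_inl, lt_iff_game_lt, quot_add, quot_add]
      exact add_lt_add (lt_iff_game_lt.1 (ox.lt_moveRight j)) (lt_iff_game_lt.1 (oy.moveLeft_lt i))
    · intro j
      rw [add_moveLeft_inr, add_moveRight_inr, lt_iff_game_lt, quot_add, quot_add]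
      exact add_lt_add_of_le_of_lt le_rfl (lt_iff_game_lt.1 (oy.left_lt_right i j))

theorem numeric_add_aux : ∀ (x y : PGame.{u}), x.Numeric → y.Numeric → (x + y).Numeric := by
  intro x
  induction x with
  | mk xl xr xL xR ihl ihr =>
    intro y
    induction y with
    | mk yl yr yL yR jhl jhr =>
      intro ox oy
      refine Numeric.mk (add_left_lt_right ox oy) (fun k => ?_) (fun l => ?_)
      · refine leftMoves_add_cases
          (P := fun k => ((mk xl xr xL xR + mk yl yr yL yR).moveLeft k).Numeric) k ?_ ?_
        · intro i
          rw [add_moveLeft_inl]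
          exact ihl i _ (ox.moveLeft i) oy
        · intro i
          rw [add_moveLeft_inr]
          exact jhl i ox (oy.moveLeft i)
      · refine rightMoves_add_cases
          (P := fun l => ((mk xl xr xL xR + mk yl yr yL yR).moveRight l).Numeric) l ?_ ?_
        · intro j
          rw [add_moveRight_inl]
          exact ihr j _ (ox.moveRight j) oy
        · intro j
          rw [add_moveRight_inr]
          exact jhr j ox (oy.moveRight j)

theorem Numeric.add {x y : PGame.{u}} (ox : x.Numeric) (oy : y.Numeric) : (x + y).Numeric :=
  numeric_add_aux x y ox oy

theorem zero_lt_one : (0 : PGame.{u}) < 1 :=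
  lt_of_lf (lf_of_le_moveLeft (i := PUnit.unit) le_rfl) numeric_zero numeric_one

theorem powHalf_zero : powHalf.{u} 0 = 1 := rfl

theorem numeric_pos_powHalf (n : ℕ) : (powHalf.{u} n).Numeric ∧ 0 < powHalf.{u} n := by
  induction n with
  | zero => exact ⟨numeric_one, PGame.zero_lt_one⟩
  | succ n ih =>
    have o : (powHalf.{u} (n + 1)).Numeric :=
      Numeric.mk (fun _ _ => ih.2) (fun _ => numeric_zero) (fun _ => ih.1)
    exact ⟨o, lt_of_lf (lf_of_le_moveLeft (i := PUnit.unit) le_rfl) numeric_zero o⟩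

theorem numeric_powHalf (n : ℕ) : (powHalf.{u} n).Numeric := (numeric_pos_powHalf n).1

theorem powHalf_pos (n : ℕ) : 0 < powHalf.{u} n := (numeric_pos_powHalf n).2

theorem powHalf_le_one (n : ℕ) : powHalf.{u} n ≤ 1 := by
  cases n with
  | zero => exact le_rfl
  | succ n =>
    rw [le_iff_forall_lf]
    exact ⟨fun _ => lf_of_lt PGame.zero_lt_one, fun j => isEmptyElim j⟩

theorem powHalf_moveLeft (n : ℕ) (i : (powHalf.{u} n).LeftMoves) : (powHalf n).moveLeft i = 0 := by
  cases n <;> rfl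

theorem powHalf_double_aux (n : ℕ)
    (hR : ∀ j, powHalf.{u} (n + 1) + powHalf (n + 1) ⧏ (powHalf n).moveRight j) :
    powHalf.{u} (n + 1) + powHalf (n + 1) ≈ powHalf n := by
  have oh := numeric_powHalf.{u} (n + 1)
  have hpos : (0 : Game) < ⟦powHalf.{u} (n + 1)⟧ := lt_iff_game_lt.1 (powHalf_pos (n + 1))
  have hlt : (⟦powHalf.{u} (n + 1)⟧ : Game) < ⟦powHalf n⟧ :=
    lt_iff_game_lt.1 (oh.lt_moveRight PUnit.unit)
  constructor
  · rw [le_iff_forall_lf]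
    refine ⟨fun k => ?_, hR⟩
    refine leftMoves_add_cases
      (P := fun k => (powHalf (n + 1) + powHalf (n + 1)).moveLeft k ⧏ powHalf n) k ?_ ?_
    · intro i
      rw [add_moveLeft_inl, powHalf_moveLeft]
      apply lf_of_lt
      rw [lt_iff_game_lt, quot_add, quot_zero, zero_add]
      exact hlt
    · intro i
      rw [add_moveLeft_inr, powHalf_moveLeft]
      apply lf_of_lt
      rw [lt_iff_game_lt, quot_add, quot_zero, add_zero]
      exact hlt
  · rw [le_iff_forall_lf]
    refine ⟨fun i => ?_, fun k => ?_⟩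
    · rw [powHalf_moveLeft]
      apply lf_of_lt
      rw [lt_iff_game_lt, quot_add, quot_zero]
      exact add_pos hpos hpos
    · refine rightMoves_add_cases
        (P := fun k => powHalf n ⧏ (powHalf (n + 1) + powHalf (n + 1)).moveRight k) k ?_ ?_
      · intro j
        rw [add_moveRight_inl]
        apply lf_of_lt
        rw [lt_iff_game_lt, quot_add]
        exact lt_add_of_pos_right _ hpos
      · intro j
        rw [add_moveRight_inr]
        apply lf_of_lt
        rw [lt_iff_game_lt, quot_add]
        exact lt_add_of_pos_left _ hpos

theorem add_powHalf_succ_self_eq_powHalf (n : ℕ) :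
    powHalf.{u} (n + 1) + powHalf (n + 1) ≈ powHalf n := by
  induction n with
  | zero => exact powHalf_double_aux 0 (fun j => PEmpty.elim j)
  | succ k ih =>
    refine powHalf_double_aux (k + 1) (fun j => lf_of_lt ?_)
    have hlt : (⟦powHalf.{u} (k + 1 + 1)⟧ : Game) < ⟦powHalf (k + 1)⟧ :=
      lt_iff_game_lt.1 ((numeric_powHalf (k + 1 + 1)).lt_moveRight PUnit.unit)
    have := game_eq ih
    rw [quot_add] at this
    rw [lt_iff_game_lt, quot_add]
    change _ < (⟦powHalf k⟧ : Game)
    rw [← this]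
    exact add_lt_add hlt hlt

end PGame

end SetTheory

open SetTheory PGame

@[simp] lemma canonNat_zero : canonNat 0 = 0 := rfl
instance canonNat_zero_leftMoves_isEmpty : IsEmpty (canonNat 0).LeftMoves :=
  inferInstanceAs (IsEmpty (LeftMoves 0))
@[simp] lemma canonNat_succ_moveLeft (n : ℕ) (i : (canonNat (n+1)).LeftMoves) :
    (canonNat (n+1)).moveLeft i = canonNat n := rfl

lemma oS_def (G x : PGame.{u}) : ordinalSum G x =
    ⟨G.LeftMoves ⊕ x.LeftMoves, G.RightMoves ⊕ x.RightMoves,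
     Sum.elim G.moveLeft fun j => ordinalSum G (x.moveLeft j),
     Sum.elim G.moveRight fun j => ordinalSum G (x.moveRight j)⟩ := by
  cases x; rfl

lemma oS_mono (G : PGame.{u}) : ∀ (x y : PGame.{u}),
    (x ≤ y → ordinalSum G x ≤ ordinalSum G y) ∧
    (x ⧏ y → ordinalSum G x ⧏ ordinalSum G y)
  | x, y => by
    constructor
    · intro h
      rw [oS_def G x, oS_def G y, le_iff_forall_lf]
      constructor
      · rintro (i | i)
        · refine lf_of_le_moveLeft (i := Sum.inl i) ?_
          exact le_rfl
        · have := (oS_mono G (x.moveLeft i) y).2 (h.moveLeft_lf i)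
          rw [oS_def G y] at this
          exact this
      · rintro (j | j)
        · refine lf_of_moveRight_le (j := Sum.inl j) ?_
          exact le_rfl
        · have := (oS_mono G x (y.moveRight j)).2 (h.lf_moveRight j)
          rw [oS_def G x] at this
          exact this
    · intro h
      rw [lf_iff_exists_le] at h
      rw [oS_def G x, oS_def G y]
      rcases h with ⟨i, hi⟩ | ⟨j, hj⟩
      · refine lf_of_le_moveLeft (i := Sum.inr i) ?_
        have := (oS_mono G x (y.moveLeft i)).1 hi
        rw [oS_def G x] at this
        exact this
      · refine lf_of_moveRight_le (j := Sum.inr j) ?_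
        have := (oS_mono G (x.moveRight j) y).1 hj
        rw [oS_def G y] at this
        exact this
termination_by x y => (x, y)
decreasing_by
  · exact Prod.Lex.left _ _ (IsOption.moveLeft _)
  · exact Prod.Lex.right _ (IsOption.moveRight _)
  · exact Prod.Lex.right _ (IsOption.moveLeft _)
  · exact Prod.Lex.left _ _ (IsOption.moveRight _)

lemma oS_congr (G : PGame.{u}) {x y : PGame.{u}} (h : x ≈ y) :
    ordinalSum G x ≈ ordinalSum G y :=
  ⟨(oS_mono G x y).1 h.1, (oS_mono G y x).1 h.2⟩

lemma canonNat_numeric : ∀ m, Numeric (canonNat m)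
  | 0 => numeric_zero
  | m + 1 => Numeric.mk (fun _ j => j.elim) (fun _ => canonNat_numeric m) (fun j => j.elim)

instance canonNat_rightMoves_isEmpty : ∀ m, IsEmpty (canonNat m).RightMoves
  | 0 => PEmpty.instIsEmpty
  | _ + 1 => PEmpty.instIsEmpty

lemma canonNat_le_succ (m : ℕ) : canonNat m ≤ canonNat (m + 1) := by
  rw [le_iff_forall_lf]
  constructor
  · intro i
    cases m with
    | zero => exact i.elim
    | succ k => exact lf_of_le_moveLeft (i := PUnit.unit) (canonNat_le_succ k)
  · intro j
    exact j.elim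

lemma canonNat_mono {a b : ℕ} (h : a ≤ b) : canonNat a ≤ canonNat b := by
  induction h with
  | refl => exact le_rfl
  | step _ ih => exact ih.trans (canonNat_le_succ _)

private lemma canonNat_succ_equiv_aux (m : ℕ)
    (hk : ∀ k : (canonNat.{u} m).LeftMoves, (canonNat m).moveLeft k + 1 ≤ canonNat m) :
    canonNat.{u} (m + 1) ≈ canonNat m + 1 := by
  constructor
  · rw [le_iff_forall_lf]
    constructor
    · intro _
      refine lf_of_le_moveLeft (i := toLeftMovesAdd (Sum.inr PUnit.unit)) ?_
      erw [add_moveLeft_inr]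
      exact (add_zero_equiv (canonNat m)).2
    · intro j
      exact isEmptyElim j
  · rw [le_iff_forall_lf]
    constructor
    · intro i
      apply leftMoves_add_cases i
      · intro k
        refine lf_of_le_moveLeft (i := PUnit.unit) ?_
        rw [add_moveLeft_inl]
        exact hk k
      · intro k
        refine lf_of_le_moveLeft (i := PUnit.unit) ?_
        rw [add_moveLeft_inr]
        exact (add_zero_equiv (canonNat m)).1
    · intro j
      exact isEmptyElim j

lemma canonNat_succ_equiv : ∀ m : ℕ, canonNat (m + 1) ≈ canonNat m + 1
  | 0 => canonNat_succ_equiv_aux 0 (fun k => isEmptyElim k)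
  | m + 1 => canonNat_succ_equiv_aux (m + 1) (fun _ => (canonNat_succ_equiv m).2)

lemma canonNat_quot (m : ℕ) : (⟦canonNat m⟧ : Game) = (m : ℤ) • (1 : Game) := by
  induction m with
  | zero => rw [canonNat_zero]; simp
  | succ k ih =>
    have := PGame.game_eq (canonNat_succ_equiv k)
    rw [quot_add, quot_one] at this
    rw [this, ih]
    push_cast
    rw [add_zsmul, one_zsmul]

lemma canonNat_nonneg (m : ℕ) : (0 : Game) ≤ ⟦canonNat m⟧ := by
  have : canonNat 0 ≤ canonNat m := canonNat_mono (Nat.zero_le m)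
  exact this

def oS_zero_relabelling : ∀ y : PGame.{u}, ordinalSum (canonNat 0) y ≡r y
  | ⟨yl, yr, yL, yR⟩ =>
    ⟨Equiv.emptySum PEmpty yl, Equiv.emptySum PEmpty yr,
     fun i => match i with
       | Sum.inl e => e.elim
       | Sum.inr a => oS_zero_relabelling (yL a),
     fun j => match j with
       | Sum.inl e => e.elim
       | Sum.inr a => oS_zero_relabelling (yR a)⟩

lemma oS_zero_quot (y : PGame.{u}) : (⟦ordinalSum (canonNat 0) y⟧ : Game) = ⟦y⟧ :=
  PGame.game_eq (oS_zero_relabelling y).equiv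

def Good (g : PGame.{u}) : Prop :=
  g.Numeric ∧ ∀ n : ℕ, (ordinalSum (canonNat n) g).Numeric ∧
    (⟦ordinalSum (canonNat n) g⟧ : Game) = ⟦canonNat n⟧ + ⟦g⟧

lemma cbase (n : ℕ) (i : (canonNat.{u} n).LeftMoves) :
    Numeric ((canonNat n).moveLeft i) ∧
      (⟦(canonNat n).moveLeft i⟧ : Game) + 1 ≤ ⟦canonNat n⟧ := by
  cases n with
  | zero => exact isEmptyElim i
  | succ k =>
    rw [canonNat_succ_moveLeft]
    refine ⟨canonNat_numeric k, ?_⟩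
    have := PGame.game_eq (canonNat_succ_equiv k)
    rw [quot_add, quot_one] at this
    rw [← this]

lemma cbase_le (n : ℕ) (i : (canonNat.{u} n).LeftMoves) :
    (⟦(canonNat n).moveLeft i⟧ : Game) < ⟦canonNat n⟧ := by
  have h := (cbase n i).2
  have : (⟦(canonNat n).moveLeft i⟧ : Game) < ⟦(canonNat n).moveLeft i⟧ + 1 := by
    have h1 : (0 : Game) < 1 := by
      have := PGame.zero_lt_one
      rw [lt_iff_game_lt] at this
      simpa using this
    simpa using h1
  exact this.trans_le h

lemma goodNat : ∀ m : ℕ, (∀ n : ℕ, (ordinalSum (canonNat.{u} n) (canonNat.{u} m)).Numeric ∧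
    ordinalSum (canonNat.{u} n) (canonNat m) ≈ canonNat (n + m))
  | 0 => by
    intro n
    rw [oS_def]
    constructor
    · refine Numeric.mk (fun i j => ?_) (fun i => ?_) (fun j => ?_)
      · rcases j with j | j
        · exact isEmptyElim j
        · rw [canonNat_zero] at j; exact isEmptyElim j
      · rcases i with i | i
        · exact (cbase n i).1
        · rw [canonNat_zero] at i; exact isEmptyElim i
      · rcases j with j | j
        · exact isEmptyElim j
        · rw [canonNat_zero] at j; exact isEmptyElim j
    · rw [Nat.add_zero]
      constructor
      · rw [le_iff_forall_lf]
        refine ⟨?_, fun j => isEmptyElim j⟩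
        rintro (i | i)
        · exact moveLeft_lf i
        · exact i.elim
      · rw [le_iff_forall_lf]
        constructor
        · intro i
          exact lf_of_le_moveLeft (i := Sum.inl i) le_rfl
        · rintro (j | j)
          · exact isEmptyElim j
          · exact j.elim
  | m + 1 => by
    intro n
    obtain ⟨ihnum, ihequiv⟩ := goodNat m n
    rw [oS_def]
    constructor
    · refine Numeric.mk (fun i j => ?_) (fun i => ?_) (fun j => ?_)
      · rcases j with j | j
        · exact isEmptyElim j
        · exact j.elim
      · rcases i with i | i
        · exact (cbase n i).1
        · exact ihnum
      · rcases j with j | j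
        · exact isEmptyElim j
        · exact j.elim
    · constructor
      · rw [le_iff_forall_lf]
        refine ⟨?_, fun j => isEmptyElim j⟩
        rintro (i | i)
        · refine lf_of_le_moveLeft (i := (PUnit.unit : (canonNat (n + (m+1))).LeftMoves)) ?_
          show (canonNat n).moveLeft i ≤ canonNat (n + m)
          rw [le_iff_game_le]
          have h2 := (cbase n i).2
          have h3 : (⟦canonNat n⟧ : Game) ≤ ⟦canonNat (n + m)⟧ :=
            canonNat_mono (Nat.le_add_right n m)
          have h1 : (0 : Game) ≤ 1 := by
            have := PGame.zero_lt_one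
            rw [lt_iff_game_lt] at this
            simpa using this.le
          have := h2.trans (h3.trans (le_add_of_nonneg_right h1))
          exact (add_le_add_iff_right 1).1 this
        · refine lf_of_le_moveLeft (i := (PUnit.unit : (canonNat (n + (m+1))).LeftMoves)) ?_
          exact ihequiv.1
      · rw [le_iff_forall_lf]
        constructor
        · intro i
          refine lf_of_le_moveLeft (i := Sum.inr PUnit.unit) ?_
          exact ihequiv.2
        · rintro (j | j)
          · exact isEmptyElim j
          · exact j.elim

lemma oS_ball (G lo hi : PGame.{u}) : ordinalSum G (ball lo hi) =
    PGame.mk (G.LeftMoves ⊕ PUnit) (G.RightMoves ⊕ PUnit)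
      (Sum.elim G.moveLeft fun _ => ordinalSum G lo)
      (Sum.elim G.moveRight fun _ => ordinalSum G hi) := rfl

lemma phq_pos (k : ℕ) : (0 : Game) < ⟦powHalf k⟧ := by
  have := powHalf_pos k
  rw [lt_iff_game_lt] at this
  simpa using this

lemma phq_le_one (k : ℕ) : (⟦powHalf k⟧ : Game) ≤ 1 := by
  have := powHalf_le_one k
  rw [le_iff_game_le] at this
  simpa using this

lemma phq_add (k : ℕ) : (⟦powHalf (k+1)⟧ : Game) + ⟦powHalf (k+1)⟧ = ⟦powHalf k⟧ := by
  have := PGame.game_eq (add_powHalf_succ_self_eq_powHalf k)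
  rw [quot_add] at this
  exact this

lemma zero_lt_one_game : (0 : Game) < 1 := by
  have := PGame.zero_lt_one
  rw [lt_iff_game_lt] at this
  simpa using this

lemma good_canonNat (m : ℕ) : Good (canonNat.{u} m) := by
  refine ⟨canonNat_numeric m, fun n => ⟨(goodNat m n).1, ?_⟩⟩
  have := PGame.game_eq (goodNat m n).2
  rw [this, canonNat_quot, canonNat_quot, canonNat_quot]
  push_cast
  rw [add_zsmul]

lemma oS_canon_leftMoves_cases (G x : PGame.{u}) (P : PGame.{u} → Prop)
    (hbase : ∀ i, P (G.moveLeft i))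
    (h : ∀ i, P (ordinalSum G (x.moveLeft i))) :
    ∀ i, P ((ordinalSum G x).moveLeft i) := by
  cases x
  rintro (i | i)
  exacts [hbase i, h i]

lemma oS_canon_rightMoves_cases (G x : PGame.{u}) (P : PGame.{u} → Prop)
    (hbase : ∀ j, P (G.moveRight j))
    (h : ∀ j, P (ordinalSum G (x.moveRight j))) :
    ∀ j, P ((ordinalSum G x).moveRight j) := by
  cases x
  rintro (j | j)
  exacts [hbase j, h j]

section BallCore

lemma ball_core (lo hi : PGame.{u}) (k : ℕ)
    (glo : Good lo) (ghi : Good hi)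
    (hval : (⟦hi⟧ : Game) = ⟦lo⟧ + ⟦powHalf k⟧)
    (hlo0 : (0 : Game) ≤ ⟦lo⟧)
    (hR : ∀ j, (⟦hi⟧ : Game) ≤ ⟦lo.moveRight j⟧ ∧ Good (lo.moveRight j))
    (hLhi : ∀ i, (⟦hi.moveLeft i⟧ : Game) ≤ ⟦lo⟧ ∧ Good (hi.moveLeft i))
    (hLlo : ∀ i, (⟦lo.moveLeft i⟧ : Game) + ⟦powHalf k⟧ ≤ ⟦lo⟧ ∧ Good (lo.moveLeft i))
    (hRhi : ∀ j, (⟦hi⟧ : Game) + ⟦powHalf k⟧ ≤ ⟦hi.moveRight j⟧ ∧ Good (hi.moveRight j))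
    (n : ℕ) :
    (ordinalSum (canonNat n) (ball lo hi)).Numeric ∧
      (⟦ordinalSum (canonNat n) (ball lo hi)⟧ : Game) =
        ⟦canonNat n⟧ + ⟦lo⟧ + ⟦powHalf (k+1)⟧ := by
  obtain ⟨numlo, hgA⟩ := glo
  obtain ⟨numhi, hgB⟩ := ghi
  obtain ⟨numA, vA⟩ := hgA n
  obtain ⟨numB, vB⟩ := hgB n
  set A := ordinalSum (canonNat n) lo with hA
  set B := ordinalSum (canonNat n) hi with hB
  set cn : Game := ⟦canonNat n⟧ with hcn
  set l : Game := ⟦lo⟧ with hl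
  set p : Game := ⟦powHalf k⟧ with hp
  set p' : Game := ⟦powHalf (k+1)⟧ with hp'
  have hpp : p' + p' = p := phq_add k
  have hppos : (0:Game) < p := phq_pos k
  have hp'pos : (0:Game) < p' := phq_pos (k+1)
  have hp1 : p ≤ 1 := phq_le_one k
  have hAB : (⟦A⟧ : Game) < ⟦B⟧ := by
    rw [vA, vB, hval, ← add_assoc]
    exact lt_add_of_pos_right _ hppos
  have hBA : (⟦B⟧ : Game) = ⟦A⟧ + p := by rw [vA, vB, hval, ← add_assoc]
  have hEA : ∀ i : (canonNat.{u} n).LeftMoves, (⟦(canonNat n).moveLeft i⟧ : Game) < ⟦A⟧ := by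
    intro i
    rw [vA]
    exact (cbase_le n i).trans_le (le_add_of_nonneg_right hlo0)
  have numX : (ordinalSum (canonNat n) (ball lo hi)).Numeric := by
    rw [oS_ball]
    refine Numeric.mk (fun i j => ?_) (fun i => ?_) (fun j => ?_)
    · rcases j with j | j
      · exact isEmptyElim j
      · rcases i with i | i
        · show (canonNat n).moveLeft i < B
          rw [lt_iff_game_lt]
          exact (hEA i).trans hAB
        · show A < B
          rw [lt_iff_game_lt]
          exact hAB
    · rcases i with i | i
      · exact (cbase n i).1
      · exact numA
    · rcases j with j | j
      · exact isEmptyElim j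
      · exact numB
  refine ⟨numX, ?_⟩
  set X := ordinalSum (canonNat n) (ball lo hi) with hX
  have hXmL : ∀ i : X.LeftMoves, (⟦X.moveLeft i⟧ : Game) ≤ ⟦A⟧ := by
    rw [hX, oS_ball]
    rintro (i | i)
    · exact (hEA i).le
    · exact le_rfl
  have hXB : (⟦X⟧ : Game) < ⟦B⟧ := by
    rw [← lt_iff_game_lt]
    exact numX.lt_moveRight (show X.RightMoves from Sum.inr PUnit.unit)
  have hAX : (⟦A⟧ : Game) < ⟦X⟧ := by
    rw [← lt_iff_game_lt]
    exact numX.moveLeft_lt (show X.LeftMoves from Sum.inr PUnit.unit)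
  have hdouble : (⟦X⟧ : Game) + ⟦X⟧ = ⟦A⟧ + ⟦B⟧ := by
    have h1 : X + X ≤ A + B := by
      rw [le_iff_forall_lt (numX.add numX) (numA.add numB)]
      constructor
      · intro i
        refine leftMoves_add_cases (P := fun i => (X + X).moveLeft i < A + B) i ?_ ?_
        · intro i'
          rw [add_moveLeft_inl, lt_iff_game_lt, quot_add, quot_add]
          exact add_lt_add_of_le_of_lt (hXmL i') hXB
        · intro i'
          rw [add_moveLeft_inr, lt_iff_game_lt, quot_add, quot_add, add_comm (⟦A⟧ : Game)]
          exact add_lt_add_of_lt_of_le hXB (hXmL i')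
      · intro j
        refine rightMoves_add_cases (P := fun j => X + X < (A + B).moveRight j) j ?_ ?_
        · intro j'
          rw [add_moveRight_inl]
          revert j'
          refine oS_canon_rightMoves_cases (canonNat n) lo (fun z => X + X < z + B) (fun j' => isEmptyElim j') ?_
          intro j0
          obtain ⟨hj, gj⟩ := hR j0
          obtain ⟨_, vj⟩ := gj.2 n
          rw [lt_iff_game_lt, quot_add, quot_add]
          have h5 : (⟦B⟧ : Game) ≤ ⟦ordinalSum (canonNat n) (lo.moveRight j0)⟧ := by
            rw [vj, vB]
            exact add_le_add_right hj cn
          calc (⟦X⟧:Game) + ⟦X⟧ < ⟦B⟧ + ⟦B⟧ := add_lt_add hXB hXB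
            _ ≤ ⟦ordinalSum (canonNat n) (lo.moveRight j0)⟧ + ⟦B⟧ := add_le_add_left h5 _
        · intro j'
          rw [add_moveRight_inr]
          revert j'
          refine oS_canon_rightMoves_cases (canonNat n) hi (fun z => X + X < A + z) (fun j' => isEmptyElim j') ?_
          intro j0
          obtain ⟨hj, gj⟩ := hRhi j0
          obtain ⟨_, vj⟩ := gj.2 n
          rw [lt_iff_game_lt, quot_add, quot_add]
          have h5 : (⟦B⟧ : Game) + p ≤ ⟦ordinalSum (canonNat n) (hi.moveRight j0)⟧ := by
            rw [vj, vB, add_assoc]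
            exact add_le_add_right hj cn
          calc (⟦X⟧:Game) + ⟦X⟧ < ⟦B⟧ + ⟦B⟧ := add_lt_add hXB hXB
            _ = ⟦A⟧ + (⟦B⟧ + p) := by rw [hBA]; abel
            _ ≤ ⟦A⟧ + ⟦ordinalSum (canonNat n) (hi.moveRight j0)⟧ := add_le_add_right h5 _
    have h2 : A + B ≤ X + X := by
      rw [le_iff_forall_lt (numA.add numB) (numX.add numX)]
      constructor
      · intro i
        refine leftMoves_add_cases (P := fun i => (A + B).moveLeft i < X + X) i ?_ ?_
        · intro i'
          rw [add_moveLeft_inl]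
          revert i'
          refine oS_canon_leftMoves_cases (canonNat n) lo (fun z => z + B < X + X) ?_ ?_
          · intro i0
            rw [lt_iff_game_lt, quot_add, quot_add]
            have h6 : (⟦(canonNat n).moveLeft i0⟧ : Game) + ⟦B⟧ ≤ ⟦A⟧ + ⟦A⟧ := by
              have hc := (cbase n i0).2
              calc (⟦(canonNat n).moveLeft i0⟧:Game) + ⟦B⟧
                  = (⟦(canonNat n).moveLeft i0⟧ + p) + (cn + l) := by rw [vB, hval]; abel
                _ ≤ (⟦(canonNat n).moveLeft i0⟧ + 1) + (cn + l) :=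
                    add_le_add_left (add_le_add_right hp1 _) _
                _ ≤ cn + (cn + l) := add_le_add_left hc _
                _ ≤ (cn + l) + (cn + l) := add_le_add_left (le_add_of_nonneg_right hlo0) _
                _ = ⟦A⟧ + ⟦A⟧ := by rw [vA]
            exact h6.trans_lt (add_lt_add hAX hAX)
          · intro i0
            obtain ⟨hi0, gi0⟩ := hLlo i0
            obtain ⟨_, vi0⟩ := gi0.2 n
            rw [lt_iff_game_lt, quot_add, quot_add]
            have h6 : (⟦ordinalSum (canonNat n) (lo.moveLeft i0)⟧ : Game) + ⟦B⟧ ≤ ⟦A⟧ + ⟦A⟧ := by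
              calc (⟦ordinalSum (canonNat n) (lo.moveLeft i0)⟧ : Game) + ⟦B⟧
                  = (⟦lo.moveLeft i0⟧ + p) + (cn + cn + l) := by rw [vi0, vB, hval]; abel
                _ ≤ l + (cn + cn + l) := add_le_add_left hi0 _
                _ = (cn + l) + (cn + l) := by abel
                _ = ⟦A⟧ + ⟦A⟧ := by rw [vA]
            exact h6.trans_lt (add_lt_add hAX hAX)
        · intro i'
          rw [add_moveLeft_inr]
          revert i'
          refine oS_canon_leftMoves_cases (canonNat n) hi (fun z => A + z < X + X) ?_ ?_
          · intro i0
            rw [lt_iff_game_lt, quot_add, quot_add]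
            have h6 : (⟦A⟧:Game) + ⟦(canonNat n).moveLeft i0⟧ ≤ ⟦A⟧ + ⟦A⟧ :=
              add_le_add_right (hEA i0).le _
            exact h6.trans_lt (add_lt_add hAX hAX)
          · intro i0
            obtain ⟨hi0, gi0⟩ := hLhi i0
            obtain ⟨_, vi0⟩ := gi0.2 n
            rw [lt_iff_game_lt, quot_add, quot_add]
            have h6 : (⟦A⟧:Game) + ⟦ordinalSum (canonNat n) (hi.moveLeft i0)⟧ ≤ ⟦A⟧ + ⟦A⟧ := by
              rw [vi0, vA]
              exact add_le_add_right (add_le_add_right hi0 cn) _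
            exact h6.trans_lt (add_lt_add hAX hAX)
      · intro j
        refine rightMoves_add_cases (P := fun j => A + B < (X + X).moveRight j) j ?_ ?_
        · intro j'
          rw [add_moveRight_inl]
          revert j'
          refine oS_canon_rightMoves_cases (canonNat n) (ball lo hi)
            (fun z => A + B < z + X) (fun j' => isEmptyElim j') ?_
          intro j0
          show A + B < B + X
          rw [lt_iff_game_lt, quot_add, quot_add, add_comm (⟦B⟧ : Game)]
          exact add_lt_add_of_lt_of_le hAX le_rfl
        · intro j'
          rw [add_moveRight_inr]
          revert j'
          refine oS_canon_rightMoves_cases (canonNat n) (ball lo hi)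
            (fun z => A + B < X + z) (fun j' => isEmptyElim j') ?_
          intro j0
          show A + B < X + B
          rw [lt_iff_game_lt, quot_add, quot_add]
          exact add_lt_add_of_lt_of_le hAX le_rfl
    rw [← quot_add, ← quot_add]
    exact Quotient.sound ⟨h1, h2⟩
  -- conclude via trichotomy
  have numZ : (A + powHalf (k+1)).Numeric := numA.add (numeric_powHalf (k+1))
  have vZ : (⟦A + powHalf (k+1)⟧ : Game) = cn + l + p' := by
    rw [quot_add, vA]
  have eqZ : (⟦A + powHalf (k+1)⟧ : Game) + ⟦A + powHalf (k+1)⟧ = ⟦A⟧ + ⟦B⟧ := by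
    rw [vZ, vA, hBA, vA]
    calc cn + l + p' + (cn + l + p') = (p' + p') + ((cn+l) + (cn+l)) := by abel
      _ = p + ((cn+l) + (cn+l)) := by rw [hpp]
      _ = cn + l + (cn + l + p) := by abel
  rcases lt_or_equiv_or_gt numX numZ with hlt | heq | hgt
  · exfalso
    rw [lt_iff_game_lt] at hlt
    have := add_lt_add hlt hlt
    rw [hdouble, eqZ] at this
    exact lt_irrefl _ this
  · have := PGame.game_eq heq
    rw [this, vZ]
  · exfalso
    rw [lt_iff_game_lt] at hgt
    have := add_lt_add hgt hgt
    rw [hdouble, eqZ] at this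
    exact lt_irrefl _ this

end BallCore

lemma phq_succ_le (k : ℕ) : (⟦powHalf (k+1)⟧ : Game) ≤ ⟦powHalf k⟧ := by
  rw [← phq_add k]
  exact le_add_of_nonneg_left (phq_pos (k+1)).le

lemma ball_good (lo hi : PGame.{u}) (k : ℕ)
    (glo : Good lo) (ghi : Good hi)
    (hval : (⟦hi⟧ : Game) = ⟦lo⟧ + ⟦powHalf k⟧)
    (hlo0 : (0 : Game) ≤ ⟦lo⟧)
    (hR : ∀ j, (⟦hi⟧ : Game) ≤ ⟦lo.moveRight j⟧ ∧ Good (lo.moveRight j))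
    (hLhi : ∀ i, (⟦hi.moveLeft i⟧ : Game) ≤ ⟦lo⟧ ∧ Good (hi.moveLeft i))
    (hLlo : ∀ i, (⟦lo.moveLeft i⟧ : Game) + ⟦powHalf k⟧ ≤ ⟦lo⟧ ∧ Good (lo.moveLeft i))
    (hRhi : ∀ j, (⟦hi⟧ : Game) + ⟦powHalf k⟧ ≤ ⟦hi.moveRight j⟧ ∧ Good (hi.moveRight j)) :
    Good (ball lo hi) ∧ (⟦ball lo hi⟧ : Game) = ⟦lo⟧ + ⟦powHalf (k+1)⟧ := by
  have core := ball_core lo hi k glo ghi hval hlo0 hR hLhi hLlo hRhi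
  have vball : (⟦ball lo hi⟧ : Game) = ⟦lo⟧ + ⟦powHalf (k+1)⟧ := by
    have h0 := (core 0).2
    rw [oS_zero_quot, canonNat_zero, quot_zero, zero_add] at h0
    exact h0
  have numball : (ball lo hi).Numeric := by
    refine Numeric.mk (fun i j => ?_) (fun _ => glo.1) (fun _ => ghi.1)
    show lo < hi
    rw [lt_iff_game_lt, hval]
    exact lt_add_of_pos_right _ (phq_pos k)
  refine ⟨⟨numball, fun n => ⟨(core n).1, ?_⟩⟩, vball⟩
  rw [(core n).2, vball, add_assoc]

def dyF : ℕ → PGame.{u} → PGame.{u} → ℕ → PGame.{u}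
  | 0, lo, hi, _ => ball lo hi
  | q + 1, lo, hi, b =>
    if b = 2^q then ball lo hi
    else if b < 2^q then dyF q lo (ball lo hi) b
    else dyF q (ball lo hi) hi (b - 2^q)

lemma pow_two_nsmul_phq (j : ℕ) : ∀ k : ℕ, (2^j) • (⟦powHalf (k+j)⟧ : Game) = ⟦powHalf k⟧ := by
  induction j with
  | zero => intro k; norm_num
  | succ i ih =>
    intro k
    have e : k + (i+1) = (k+1) + i := by omega
    rw [e, pow_succ, mul_nsmul, ih (k+1), two_nsmul, phq_add]

lemma master : ∀ (q b k : ℕ) (lo hi : PGame.{u}), 0 < b → b < 2^(q+1) →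
    Good lo → Good hi →
    (⟦hi⟧ : Game) = ⟦lo⟧ + ⟦powHalf k⟧ →
    (0 : Game) ≤ ⟦lo⟧ →
    (∀ j, (⟦hi⟧ : Game) ≤ ⟦lo.moveRight j⟧ ∧ Good (lo.moveRight j)) →
    (∀ i, (⟦hi.moveLeft i⟧ : Game) ≤ ⟦lo⟧ ∧ Good (hi.moveLeft i)) →
    (∀ i, (⟦lo.moveLeft i⟧ : Game) + ⟦powHalf k⟧ ≤ ⟦lo⟧ ∧ Good (lo.moveLeft i)) →
    (∀ j, (⟦hi⟧ : Game) + ⟦powHalf k⟧ ≤ ⟦hi.moveRight j⟧ ∧ Good (hi.moveRight j)) →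
    Good (dyF (q+1) lo hi b) ∧
      (⟦dyF (q+1) lo hi b⟧ : Game) = ⟦lo⟧ + b • ⟦powHalf (k+q+1)⟧ := by
  intro q
  induction q with
  | zero =>
    intro b k lo hi hb0 hb2 glo ghi hval hlo0 hR hLhi hLlo hRhi
    have hb1 : b = 1 := by omega
    subst hb1
    have hb : dyF 1 lo hi 1 = ball lo hi := by
      rw [dyF]
      simp
    rw [hb]
    obtain ⟨g, v⟩ := ball_good lo hi k glo ghi hval hlo0 hR hLhi hLlo hRhi
    exact ⟨g, by rw [v, one_nsmul]⟩
  | succ q ih =>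
    intro b k lo hi hb0 hb2 glo ghi hval hlo0 hR hLhi hLlo hRhi
    obtain ⟨gmid, vmid⟩ := ball_good lo hi k glo ghi hval hlo0 hR hLhi hLlo hRhi
    have hp'le : (⟦powHalf (k+1)⟧ : Game) ≤ ⟦powHalf k⟧ := phq_succ_le k
    have hpp : (⟦powHalf (k+1)⟧ : Game) + ⟦powHalf (k+1)⟧ = ⟦powHalf k⟧ := phq_add k
    rcases Nat.lt_trichotomy b (2^(q+1)) with hlt | heq | hgt
    · have hb : dyF (q+2) lo hi b = dyF (q+1) lo (ball lo hi) b := by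
        rw [dyF]
        have h1 : ¬ (b = 2^(q+1)) := by omega
        rw [if_neg h1, if_pos hlt]
      rw [hb]
      have call := ih b (k+1) lo (ball lo hi) hb0 hlt glo gmid vmid hlo0
        (fun j => ⟨by
          rw [vmid]
          calc (⟦lo⟧ : Game) + ⟦powHalf (k+1)⟧ ≤ ⟦lo⟧ + ⟦powHalf k⟧ :=
              add_le_add_right hp'le _
            _ = ⟦hi⟧ := hval.symm
            _ ≤ _ := (hR j).1, (hR j).2⟩)
        (fun i => ⟨le_rfl, glo⟩)
        (fun i => ⟨((add_le_add_right hp'le _).trans (hLlo i).1), (hLlo i).2⟩)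
        (fun j => ⟨by rw [vmid, add_assoc, hpp, ← hval]; exact le_rfl, ghi⟩)
      refine ⟨call.1, ?_⟩
      rw [call.2]
      have : k + 1 + q + 1 = k + (q + 1) + 1 := by omega
      rw [this]
    · have hb : dyF (q+2) lo hi b = ball lo hi := by
        rw [dyF, if_pos heq]
      rw [hb]
      refine ⟨gmid, ?_⟩
      rw [vmid, heq]
      have h3 : k + 1 + (q + 1) = k + (q + 1) + 1 := by omega
      have := pow_two_nsmul_phq (q+1) (k+1)
      rw [h3] at this
      rw [this]
    · have hb : dyF (q+2) lo hi b = dyF (q+1) (ball lo hi) hi (b - 2^(q+1)) := by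
        rw [dyF]
        have h1 : ¬ (b = 2^(q+1)) := by omega
        have h2 : ¬ (b < 2^(q+1)) := by omega
        rw [if_neg h1, if_neg h2]
      rw [hb]
      have hsub0 : 0 < b - 2^(q+1) := by omega
      have hsub2 : b - 2^(q+1) < 2^(q+1) := by
        have : (2:ℕ)^(q+1+1) = 2^(q+1) + 2^(q+1) := by rw [pow_succ]; omega
        omega
      have call := ih (b - 2^(q+1)) (k+1) (ball lo hi) hi hsub0 hsub2 gmid ghi
        (by rw [vmid, add_assoc, hpp, ← hval])
        (hlo0.trans (by rw [vmid]; exact le_add_of_nonneg_right (phq_pos (k+1)).le))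
        (fun j => ⟨le_rfl, ghi⟩)
        (fun i => ⟨(hLhi i).1.trans (by rw [vmid]; exact le_add_of_nonneg_right (phq_pos (k+1)).le), (hLhi i).2⟩)
        (fun i => ⟨by rw [vmid]; exact le_rfl, glo⟩)
        (fun j => ⟨((add_le_add_right hp'le _).trans (hRhi j).1), (hRhi j).2⟩)
      refine ⟨call.1, ?_⟩
      rw [call.2, vmid]
      have h3 : k + 1 + q + 1 = k + (q + 1) + 1 := by omega
      rw [h3]
      have h4 : (⟦powHalf (k+1)⟧ : Game) = (2^(q+1)) • ⟦powHalf (k + (q+1) + 1)⟧ := by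
        have := pow_two_nsmul_phq (q+1) (k+1)
        have h5 : k + 1 + (q + 1) = k + (q + 1) + 1 := by omega
        rw [h5] at this
        rw [this]
      rw [add_assoc, h4, ← add_nsmul]
      have h6 : 2^(q+1) + (b - 2^(q+1)) = b := by omega
      rw [h6]

lemma good_canonNat_moveLeft (m : ℕ) (i : (canonNat.{u} m).LeftMoves) :
    Good ((canonNat m).moveLeft i) := by
  cases m with
  | zero => exact isEmptyElim i
  | succ m' =>
    rw [canonNat_succ_moveLeft]
    exact good_canonNat m'

/-- For integers `n, m, q ≥ 0` and `b` either `0` or odd with `0 < b < 2^q`, `N` the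
canonical form of `n`, and any number `H` of value `m + b/2^q`:
`N : H = n + m + b/2^q`. -/
theorem canon_ordinalSum_pos (n m q b : ℕ)
    (hb : b = 0 ∨ (Odd b ∧ 0 < b ∧ b < 2 ^ q))
    (H : PGame) (hH : H.Numeric)
    (hHval : (⟦H⟧ : Game) = dyadicVal m 0 + dyadicVal b q) :
    (⟦ordinalSum (canonNat n) H⟧ : Game) =
      dyadicVal ((n : ℤ) + (m : ℤ)) 0 + dyadicVal b q := by
  have hph0 : (⟦powHalf 0⟧ : Game) = 1 := by rw [powHalf_zero, quot_one]
  have hdm : dyadicVal m 0 = ⟦canonNat m⟧ := by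
    rw [dyadicVal, hph0, canonNat_quot]
  have hgoal : dyadicVal ((n : ℤ) + (m : ℤ)) 0 = ⟦canonNat n⟧ + ⟦canonNat m⟧ := by
    rw [dyadicVal, hph0, add_zsmul, canonNat_quot, canonNat_quot]
  rcases hb with hb0 | ⟨hodd, hbpos, hblt⟩
  · subst hb0
    have hdb : dyadicVal ((0:ℕ):ℤ) q = 0 := by
      rw [dyadicVal]
      norm_num
    rw [hdb, add_zero] at hHval ⊢
    rw [hdm] at hHval
    have hequiv : H ≈ canonNat m := equiv_iff_game_eq.2 hHval
    have := PGame.game_eq (oS_congr (canonNat n) hequiv)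
    rw [this, (good_canonNat m).2 n |>.2, hgoal]
  · obtain ⟨q', rfl⟩ : ∃ q', q = q' + 1 := by
      cases q with
      | zero => omega
      | succ q' => exact ⟨q', rfl⟩
    have hsucc : (⟦canonNat (m+1)⟧ : Game) = ⟦canonNat m⟧ + ⟦powHalf 0⟧ := by
      have := PGame.game_eq (canonNat_succ_equiv m)
      rw [quot_add, quot_one] at this
      rw [this, hph0]
    have hmain := master q' b 0 (canonNat m) (canonNat (m+1)) hbpos hblt
      (good_canonNat m) (good_canonNat (m+1)) hsucc (canonNat_nonneg m)
      (fun j => isEmptyElim j)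
      (fun i => ⟨by rw [canonNat_succ_moveLeft], good_canonNat_moveLeft (m+1) i⟩)
      (fun i => ⟨by rw [hph0]; exact (cbase m i).2, good_canonNat_moveLeft m i⟩)
      (fun j => isEmptyElim j)
    obtain ⟨gG, vG⟩ := hmain
    have h0q : 0 + q' + 1 = q' + 1 := by omega
    rw [h0q] at vG
    have hdb : dyadicVal b (q'+1) = b • (⟦powHalf (q'+1)⟧ : Game) := by
      rw [dyadicVal, natCast_zsmul]
    have hHG : (⟦H⟧ : Game) = ⟦dyF (q'+1) (canonNat m) (canonNat (m+1)) b⟧ := by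
      rw [vG, hHval, hdm, hdb]
    have hequiv : H ≈ dyF (q'+1) (canonNat m) (canonNat (m+1)) b := equiv_iff_game_eq.2 hHG
    have := PGame.game_eq (oS_congr (canonNat n) hequiv)
    rw [this, (gG.2 n).2, vG, hgoal, hdb, add_assoc]
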